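/- Let K be a centrally symmetric convex body in ℝⁿ, let x₁,…,x_m ∈ ℝⁿ, and let z be a point in the convex hull of {x₁,…,x_m}. Then the K-length of the closed polygon x₁x₂⋯x_m is at least the K-length of the triangle x₁ z x_m, i.e. ‖x₁−x_m‖_K + Σ_{i=1}^{m−1}‖x_{i+1}−x_i‖_K ≥ ‖z−x₁‖_K + ‖x_m−z‖_K + ‖x₁−x_m‖_K. -/
import Mathlib
set_option maxHeartbeats 1000000

open Finset

/-- The `K`-length of the closed polygon with vertices `x 0, …, x (m-1)`. -/
noncomputable def KLength {n : ℕ} (K : Set (EuclideanSpace ℝ (Fin n))) (m : ℕ)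
    (x : ℕ → EuclideanSpace ℝ (Fin n)) : ℝ :=
  ∑ i ∈ Finset.range m, gauge K (x ((i + 1) % m) - x i)

theorem stmt1 {n m : ℕ} (K : Set (EuclideanSpace ℝ (Fin n)))
    (hKconv : Convex ℝ K) (hKcpt : IsCompact K) (hK0 : (0 : EuclideanSpace ℝ (Fin n)) ∈ interior K)
    (hKsymm : K = -K) (hm : 1 ≤ m)
    (x : ℕ → EuclideanSpace ℝ (Fin n)) (z : EuclideanSpace ℝ (Fin n))
    (hz : z ∈ convexHull ℝ (x '' Set.Iio m)) :
    gauge K (z - x 0) + gauge K (x (m - 1) - z) + gauge K (x 0 - x (m - 1)) ≤ KLength K m x := by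
  have habs : Absorbent ℝ K := absorbent_nhds_zero (mem_interior_iff_mem_nhds.mp hK0)
  have htri : ∀ a b : EuclideanSpace ℝ (Fin n), gauge K (a + b) ≤ gauge K a + gauge K b :=
    gauge_add_le hKconv habs
  -- convexity of the function y ↦ gauge (y - x 0) + gauge (x (m-1) - y)
  set g : EuclideanSpace ℝ (Fin n) → ℝ :=
    fun y => gauge K (y - x 0) + gauge K (x (m - 1) - y) with hg
  have hgconv : ConvexOn ℝ Set.univ g := by
    constructor
    · exact convex_univ
    · intro p _ q _ a b ha hb hab
      have hb' : b = 1 - a := by linarith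
      subst hb'
      have h1 : gauge K ((a • p + (1-a) • q) - x 0) ≤
          a * gauge K (p - x 0) + (1-a) * gauge K (q - x 0) := by
        have : (a • p + (1-a) • q) - x 0 = a • (p - x 0) + (1-a) • (q - x 0) := by
          module
        rw [this]
        calc gauge K (a • (p - x 0) + (1-a) • (q - x 0))
            ≤ gauge K (a • (p - x 0)) + gauge K ((1-a) • (q - x 0)) := htri _ _
          _ = a * gauge K (p - x 0) + (1-a) * gauge K (q - x 0) := by
              rw [gauge_smul_of_nonneg ha, gauge_smul_of_nonneg (by linarith : (0:ℝ) ≤ 1 - a), smul_eq_mul, smul_eq_mul]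
      have h2 : gauge K (x (m - 1) - (a • p + (1-a) • q)) ≤
          a * gauge K (x (m - 1) - p) + (1-a) * gauge K (x (m - 1) - q) := by
        have : x (m - 1) - (a • p + (1-a) • q) =
            a • (x (m - 1) - p) + (1-a) • (x (m - 1) - q) := by
          module
        rw [this]
        calc gauge K (a • (x (m - 1) - p) + (1-a) • (x (m - 1) - q))
            ≤ gauge K (a • (x (m - 1) - p)) + gauge K ((1-a) • (x (m - 1) - q)) := htri _ _
          _ = a * gauge K (x (m - 1) - p) + (1-a) * gauge K (x (m - 1) - q) := by
              rw [gauge_smul_of_nonneg ha, gauge_smul_of_nonneg (by linarith : (0:ℝ) ≤ 1 - a), smul_eq_mul, smul_eq_mul]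
      simp only [hg, smul_eq_mul]
      linarith
  obtain ⟨y, hy, hzy⟩ := hgconv.exists_ge_of_mem_convexHull (Set.subset_univ _) hz
  obtain ⟨j, hj, rfl⟩ := hy
  have hj' : j ≤ m - 1 := Nat.le_sub_one_of_lt hj
  -- telescoping bound
  have htel : ∀ a b : ℕ, a ≤ b →
      gauge K (x b - x a) ≤ ∑ i ∈ Finset.Ico a b, gauge K (x (i + 1) - x i) := by
    intro a b hab
    induction b with
    | zero => simp [Nat.le_zero.mp hab, gauge_zero]
    | succ b ih =>
      rcases Nat.lt_or_ge a (b + 1) with h | h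
      · have hab' : a ≤ b := Nat.lt_succ_iff.mp h
        rw [Finset.sum_Ico_succ_top hab']
        calc gauge K (x (b + 1) - x a)
            = gauge K ((x b - x a) + (x (b + 1) - x b)) := by congr 1; abel
          _ ≤ gauge K (x b - x a) + gauge K (x (b + 1) - x b) := htri _ _
          _ ≤ _ := by linarith [ih hab']
      · have : a = b + 1 := le_antisymm hab h
        simp [this, gauge_zero]
  have h1 : gauge K (x j - x 0) ≤ ∑ i ∈ Finset.Ico 0 j, gauge K (x (i + 1) - x i) :=
    htel 0 j (Nat.zero_le _)
  have h2 : gauge K (x (m - 1) - x j) ≤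
      ∑ i ∈ Finset.Ico j (m - 1), gauge K (x (i + 1) - x i) := htel j (m - 1) hj'
  have hsplit : (∑ i ∈ Finset.Ico 0 j, gauge K (x (i + 1) - x i)) +
      ∑ i ∈ Finset.Ico j (m - 1), gauge K (x (i + 1) - x i) =
      ∑ i ∈ Finset.range (m - 1), gauge K (x (i + 1) - x i) := by
    rw [Finset.range_eq_Ico]
    exact Finset.sum_Ico_consecutive _ (Nat.zero_le _) hj'

  -- compute KLength
  have hKL : KLength K m x =
      (∑ i ∈ Finset.range (m - 1), gauge K (x (i + 1) - x i)) +
        gauge K (x 0 - x (m - 1)) := by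
    obtain ⟨k, rfl⟩ := Nat.exists_eq_succ_of_ne_zero (by omega : m ≠ 0)
    simp only [Nat.succ_eq_add_one, Nat.add_sub_cancel]
    unfold KLength
    rw [Finset.sum_range_succ, Nat.mod_self]
    congr 1
    refine Finset.sum_congr rfl fun i hi => ?_
    rw [Finset.mem_range] at hi
    rw [Nat.mod_eq_of_lt (by omega)]
  have hgz : g z ≤ ∑ i ∈ Finset.range (m - 1), gauge K (x (i + 1) - x i) := by
    calc g z ≤ g (x j) := hzy
      _ ≤ _ := by rw [← hsplit]; exact add_le_add h1 h2
  simp only [hg] at hgz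
  rw [hKL]
  linarith
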